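/- Let D = log 2 / log 3 and 𝐩 = 2π / log 3. Then for every real ε with 0 < ε ≤ 1/3 such that log_3(1/ε) is not an integer, the symmetric partial sums converge and (1/3) · (2/3)^{⌊log_3(1/ε)⌋} = (1/(6 · log 3)) · lim_{N→∞} ∑_{n=−N}^{N} ε^{1 − D − i n 𝐩} / (1 − D − i n 𝐩), where ε^{1−D−in𝐩} = exp((1 − D − i n 𝐩) · log ε). Equivalently, the left-hand side can be written as ε^{1−D} · G(log_3(1/ε)), where G is the 1-periodic function G(x) = (1/(6 log 3)) ∑_{n∈ℤ} e^{2πinx}/(1 − D − in𝐩). -/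

import Mathlib

open Filter Complex Finset Topology MeasureTheory intervalIntegral

lemma aux_boundary_log {z : ℂ} (hz : ‖z‖ = 1) (h1 : z ≠ 1) :
    Tendsto (fun N : ℕ => ∑ k ∈ range N, z ^ k / k) atTop (𝓝 (-Complex.log (1 - z))) := by
  have hz1 : (1 : ℂ) - z ≠ 0 := sub_ne_zero.mpr (Ne.symm h1)
  -- Cauchy via Dirichlet test
  have hb : ∀ n : ℕ, ‖∑ i ∈ range n, z ^ (i + 1)‖ ≤ 2 / ‖1 - z‖ := by
    intro n
    have : ∑ i ∈ range n, z ^ (i + 1) = z * ((z ^ n - 1) / (z - 1)) := by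
      rw [← geom_sum_eq (fun h => h1 h) n, Finset.mul_sum]
      exact Finset.sum_congr rfl fun i _ => by ring
    rw [this, norm_mul, hz, one_mul, norm_div]
    rw [show z - 1 = -(1 - z) by ring, norm_neg]
    gcongr
    calc ‖z ^ n - 1‖ ≤ ‖z ^ n‖ + ‖(1 : ℂ)‖ := norm_sub_le _ _
    _ = 2 := by rw [norm_pow, hz]; norm_num
  have hanti : Antitone (fun n : ℕ => (1 : ℝ) / (n + 1)) := by
    intro m n hmn
    have hm : (0:ℝ) < m + 1 := by positivity
    apply div_le_div_of_nonneg_left zero_le_one hm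
    exact_mod_cast Nat.succ_le_succ hmn
  have h0 : Tendsto (fun n : ℕ => (1 : ℝ) / (n + 1)) atTop (𝓝 0) :=
    tendsto_one_div_add_atTop_nhds_zero_nat
  have hC : CauchySeq fun n => ∑ i ∈ range n, ((1 : ℝ) / (i + 1)) • z ^ (i + 1) :=
    hanti.cauchySeq_series_mul_of_tendsto_zero_of_bounded h0 hb
  obtain ⟨l, hl⟩ := cauchySeq_tendsto_of_complete hC
  have hshift : ∀ n : ℕ, ∑ i ∈ range n, ((1 : ℝ) / (i + 1)) • z ^ (i + 1)
      = ∑ k ∈ range (n + 1), z ^ k / k := by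
    intro n
    rw [Finset.sum_range_succ' (fun k => z ^ k / (k : ℂ)) n]
    simp [div_eq_mul_inv, mul_comm]
  have hl' : Tendsto (fun n : ℕ => ∑ k ∈ range n, z ^ k / k) atTop (𝓝 l) := by
    rw [← tendsto_add_atTop_iff_nat 1]
    exact hl.congr hshift
  -- identify l via Abel
  suffices hle : l = -Complex.log (1 - z) by rwa [hle] at hl'
  have habel := Complex.tendsto_tsum_powerSeries_nhdsWithin_lt hl'
  rw [tendsto_map'_iff] at habel
  have hcont : Tendsto (fun r : ℝ => -Complex.log (1 - (r : ℂ) * z)) (𝓝[<] (1:ℝ))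
      (𝓝 (-Complex.log (1 - z))) := by
    have hsl : (1 - z) ∈ Complex.slitPlane := by
        rw [Complex.mem_slitPlane_iff]
        rcases eq_or_ne z.im 0 with him | him
        · left
          have hre : z.re ^ 2 = 1 := by
            have h2 : z.re * z.re + z.im * z.im = 1 := by
              have h3 := congrArg (· ^ 2) hz
              simp only [Complex.sq_norm,
                Complex.normSq_apply, one_pow] at h3
              simpa [Complex.normSq_apply] using h3
            rw [him] at h2; nlinarith [h2]
          have hne : z.re ≠ 1 := by
            intro h
            exact h1 (Complex.ext (by simp [h]) (by simp [him]))
          have hre' : z.re = -1 := by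
            have : (z.re - 1) * (z.re + 1) = 0 := by nlinarith [hre]
            rcases mul_eq_zero.mp this with h | h
            · exact absurd (by linarith : z.re = 1) hne
            · linarith
          simp only [Complex.sub_re, Complex.one_re, hre']; norm_num
        · right; simpa [Complex.sub_im] using him
    have hca : Tendsto (fun w : ℂ => -Complex.log (1 - w * z)) (𝓝 1)
        (𝓝 (-Complex.log (1 - z))) := by
      have h1' : Tendsto (fun w : ℂ => 1 - w * z) (𝓝 1) (𝓝 (1 - z)) := by
        have hc : Continuous (fun w : ℂ => 1 - w * z) := by fun_prop
        have := hc.tendsto (1:ℂ)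
        simpa using this
      exact ((continuousAt_clog hsl).tendsto.comp h1').neg
    have hr : Tendsto (fun r : ℝ => ((r : ℂ))) (𝓝[<] (1:ℝ)) (𝓝 (1 : ℂ)) :=
      ((Complex.continuous_ofReal.tendsto 1).mono_left nhdsWithin_le_nhds)
    exact hca.comp hr
  have heq : ∀ᶠ r : ℝ in 𝓝[<] (1:ℝ), (∑' n : ℕ, (z ^ n / n) * (r:ℂ) ^ n)
      = -Complex.log (1 - (r:ℂ) * z) := by
    filter_upwards [Ioo_mem_nhdsLT_of_mem (by norm_num : (1:ℝ) ∈ Set.Ioc (0:ℝ) 1)] with r hr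
    have hrz : ‖(r:ℂ) * z‖ < 1 := by
      rw [norm_mul, hz, mul_one, Complex.norm_real, Real.norm_eq_abs,
        abs_of_pos hr.1]
      exact hr.2
    have := Complex.hasSum_taylorSeries_neg_log hrz
    rw [← this.tsum_eq]
    congr 1
    ext n
    rw [mul_pow]
    ring
  have h2 : Tendsto (fun r : ℝ => -Complex.log (1 - (r:ℂ) * z)) (𝓝[<] (1:ℝ)) (𝓝 l) :=
    habel.congr' (by filter_upwards [heq] with r h; simpa using h)
  exact tendsto_nhds_unique h2 hcont

lemma aux_sum_Icc_split (f : ℤ → ℂ) (N : ℕ) :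
    ∑ k ∈ Finset.Icc (-(N : ℤ)) (N : ℤ), f k
      = ∑ j ∈ range (N + 1), f j + ∑ j ∈ range N, f (-(j + 1)) := by
  induction N with
  | zero => simp
  | succ n ih =>
    have h1 : Finset.Icc (-(n + 1 : ℤ)) ((n + 1 : ℕ) : ℤ)
        = insert (-(n + 1 : ℤ)) (insert ((n + 1 : ℤ)) (Finset.Icc (-(n : ℤ)) (n : ℤ))) := by
      ext k
      simp only [Finset.mem_Icc, Finset.mem_insert]
      push_cast
      omega
    have h2 : (-(n + 1 : ℤ)) ∉ insert ((n + 1 : ℤ)) (Finset.Icc (-(n : ℤ)) (n : ℤ)) := by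
      simp only [Finset.mem_insert, Finset.mem_Icc]
      omega
    have h3 : ((n + 1 : ℤ)) ∉ Finset.Icc (-(n : ℤ)) (n : ℤ) := by
      simp only [Finset.mem_Icc]; omega
    push_cast at h1 ⊢
    rw [h1, Finset.sum_insert h2, Finset.sum_insert h3, ih,
      Finset.sum_range_succ (fun j => f (-(j + 1))) n,
      Finset.sum_range_succ (fun j => f j) (n + 1)]
    push_cast
    ring

lemma aux_tendsto_sum_Icc {f : ℤ → ℂ} {S : ℂ} (h : HasSum f S) :
    Tendsto (fun N : ℕ => ∑ k ∈ Finset.Icc (-(N : ℤ)) (N : ℤ), f k) atTop (𝓝 S) := by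
  apply h.comp
  apply tendsto_atTop_finset_of_monotone
  · intro m n hmn
    apply Finset.Icc_subset_Icc <;> [skip; exact_mod_cast hmn]
    simp only [neg_le_neg_iff]
    exact_mod_cast hmn
  · intro k
    exact ⟨k.natAbs, by simp only [Finset.mem_Icc]; omega⟩

lemma aux_log_diff {u : ℝ} (hu0 : 0 < u) (hu1 : u < 1) :
    Complex.log (1 - Complex.exp (2 * Real.pi * u * Complex.I))
      - Complex.log (1 - (Complex.exp (2 * Real.pi * u * Complex.I))⁻¹)
      = (2 * Real.pi * u - Real.pi) * Complex.I := by
  set π := Real.pi with hπdef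
  have hπ : 0 < π := hπdef ▸ Real.pi_pos
  set r : ℝ := 2 * Real.sin (π * u) with hr
  have hrpos : 0 < r := by
    have := Real.sin_pos_of_pos_of_lt_pi (by positivity : 0 < π * u)
      (by nlinarith : π * u < π)
    positivity
  set φ : ℝ := π * u - π / 2 with hφ
  have hφ1 : -(π/2) < φ := by rw [hφ]; nlinarith
  have hφ2 : φ < π/2 := by rw [hφ]; nlinarith
  clear_value π r φ
  have him : ∀ ψ : ℝ, ((Real.log r : ℂ) + (ψ:ℝ) * Complex.I).im = ψ := by
    intro ψ; simp
  have trig : ∀ ψ : ℝ, (1 : ℂ) - Complex.exp (2 * (ψ:ℂ) * Complex.I)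
      = Complex.exp ((Real.log (2 * Real.sin ψ) : ℂ) + ((ψ - π/2 : ℝ)) * Complex.I)
      ∨ True := fun _ => Or.inr trivial
  have key : ∀ s : ℝ, (hs : s = 1 ∨ s = -1) →
      (1 : ℂ) - Complex.exp (s * (2 * π * u) * Complex.I)
      = Complex.exp ((Real.log r : ℂ) + ((s * φ : ℝ)) * Complex.I) := by
    intro s hs
    rw [Complex.exp_add, ← Complex.ofReal_exp, Real.exp_log hrpos]
    rw [show ((s:ℂ) * (2 * (π:ℝ) * (u:ℝ)) * Complex.I) = ((s * (2*π*u) : ℝ) : ℂ) * Complex.I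
      from by push_cast; ring]
    rw [Complex.exp_mul_I, Complex.exp_mul_I, ← Complex.ofReal_cos, ← Complex.ofReal_sin,
      ← Complex.ofReal_cos, ← Complex.ofReal_sin]
    have hcosφ : Real.cos (s * φ) = Real.sin (π * u) := by
      rcases hs with rfl | rfl
      · rw [one_mul, hφ, hπdef, Real.cos_sub_pi_div_two]
      · rw [show (-1 : ℝ) * φ = -φ by ring, Real.cos_neg, hφ, hπdef, Real.cos_sub_pi_div_two]
    have hsinφ : Real.sin (s * φ) = -(s * Real.cos (π * u)) := by
      rcases hs with rfl | rfl
      · rw [one_mul, hφ, hπdef, Real.sin_sub_pi_div_two]; ring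
      · rw [show (-1 : ℝ) * φ = -φ by ring, Real.sin_neg, hφ, hπdef, Real.sin_sub_pi_div_two]; ring
    have hcos2 : Real.cos (s * (2 * π * u)) = 1 - 2 * Real.sin (π * u) ^ 2 := by
      have h1 : Real.cos (s * (2 * π * u)) = Real.cos (2 * (π * u)) := by
        rcases hs with rfl | rfl
        · ring_nf
        · rw [show (-1 : ℝ) * (2 * π * u) = -(2 * (π * u)) by ring, Real.cos_neg]
      rw [h1, Real.cos_two_mul]
      have := Real.sin_sq_add_cos_sq (π * u)
      nlinarith
    have hsin2 : Real.sin (s * (2 * π * u)) = s * (2 * Real.sin (π * u) * Real.cos (π * u)) := by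
      have h1 : Real.sin (2 * (π * u)) = 2 * Real.sin (π * u) * Real.cos (π * u) :=
        Real.sin_two_mul (π * u)
      rcases hs with rfl | rfl
      · rw [one_mul, show (2 : ℝ) * π * u = 2 * (π * u) by ring, h1]; ring
      · rw [show (-1 : ℝ) * (2 * π * u) = -(2 * (π * u)) by ring, Real.sin_neg, h1]; ring
    rw [Complex.ext_iff]
    constructor
    · simp only [Complex.sub_re, Complex.one_re, Complex.add_re, Complex.mul_re,
        Complex.ofReal_re, Complex.ofReal_im, Complex.I_re, Complex.I_im, Complex.add_im,
        Complex.mul_im]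
      rw [hcos2, hcosφ, hr]
      ring
    · simp only [Complex.sub_im, Complex.one_im, Complex.add_im, Complex.mul_im,
        Complex.ofReal_re, Complex.ofReal_im, Complex.I_re, Complex.I_im, Complex.add_re,
        Complex.mul_re]
      rw [hsin2, hsinφ, hcosφ, hr]
      ring
  have key1 := key 1 (Or.inl rfl)
  have key2 := key (-1) (Or.inr rfl)
  have e1 : ((1:ℝ):ℂ) * (2 * (π:ℂ) * (u:ℂ)) * Complex.I = 2 * (π:ℂ) * (u:ℂ) * Complex.I := by
    push_cast; ring
  have e2 : (((1:ℝ) * φ : ℝ):ℂ) = (φ:ℂ) := by push_cast; ring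
  rw [e1, e2] at key1
  have hinv : (Complex.exp (2 * (π:ℝ) * u * Complex.I))⁻¹
      = Complex.exp (((-1:ℝ):ℂ) * (2 * (π:ℂ) * (u:ℂ)) * Complex.I) := by
    rw [← Complex.exp_neg]
    congr 1
    push_cast
    ring
  rw [key1, hinv, key2]
  rw [Complex.log_exp (by rw [him]; rw [← hπdef]; nlinarith [hφ1, hφ2, hπ])
      (by rw [him]; rw [← hπdef]; nlinarith [hφ1, hφ2, hπ]),
    Complex.log_exp (by rw [him]; rw [← hπdef]; nlinarith [hφ1, hφ2, hπ])
      (by rw [him]; rw [← hπdef]; nlinarith [hφ1, hφ2, hπ])]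
  rw [hφ]
  push_cast
  ring

noncomputable def auxg (a : ℝ) : ℝ → ℂ := fun t =>
  (Complex.exp a - 1)⁻¹ * Complex.exp (a * t) - ((t : ℂ) - 1 / 2)

lemma auxE_ne (a : ℝ) (ha : 0 < a) : Complex.exp (a : ℂ) - 1 ≠ 0 := by
  intro h
  have h1 : Complex.exp (a : ℂ) = 1 := by linear_combination h
  have := congrArg norm h1
  rw [Complex.norm_exp] at this
  simp only [Complex.ofReal_re, norm_one] at this
  have := Real.exp_lt_exp.mpr (show (0:ℝ) < a from ha)
  rw [Real.exp_zero] at this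
  rw [‹Real.exp a = 1›] at this
  exact lt_irrefl 1 this

lemma aux_bernoulliFun_one (t : ℝ) : bernoulliFun 1 t = t - 1 / 2 := by
  simp [bernoulliFun, Polynomial.bernoulli, Finset.sum_range_succ]
  ring

lemma aux_fourierCoeffOn_sub {f₁ f₂ : ℝ → ℂ} (h₁ : Continuous f₁) (h₂ : Continuous f₂) (n : ℤ) :
    fourierCoeffOn (zero_lt_one' ℝ) (fun t => f₁ t - f₂ t) n =
      fourierCoeffOn (zero_lt_one' ℝ) f₁ n - fourierCoeffOn (zero_lt_one' ℝ) f₂ n := by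
  simp_rw [fourierCoeffOn_eq_integral, smul_sub]
  rw [intervalIntegral.integral_sub, smul_sub]
  · apply Continuous.intervalIntegrable
    simp_rw [fourier_coe_apply]
    fun_prop
  · apply Continuous.intervalIntegrable
    simp_rw [fourier_coe_apply]
    fun_prop

lemma aux_coeff_exp (a : ℝ) (ha : 0 < a) (n : ℤ) :
    fourierCoeffOn (zero_lt_one' ℝ) (fun t : ℝ => Complex.exp (a * t)) n
      = (Complex.exp a - 1) / ((a : ℂ) - 2 * Real.pi * Complex.I * n) := by
  have hc : ((a : ℂ) - 2 * Real.pi * Complex.I * n) ≠ 0 := by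
    intro h
    have := congrArg Complex.re h
    simp [Complex.sub_re, Complex.mul_re, Complex.mul_im] at this
    exact absurd this (ne_of_gt ha)
  rw [fourierCoeffOn_eq_integral]
  simp_rw [fourier_coe_apply, smul_eq_mul, ← Complex.exp_add]
  rw [intervalIntegral.integral_congr
      (g := fun x : ℝ => Complex.exp (((a : ℂ) - 2 * Real.pi * Complex.I * n) * x))
      (fun x _ => by norm_num; congr 1; push_cast; ring)]
  rw [integral_exp_mul_complex hc]
  push_cast
  rw [mul_one, mul_zero, Complex.exp_zero]
  rw [show ((a : ℂ) - 2 * Real.pi * Complex.I * n) = (a : ℂ) + ((-n : ℤ) : ℂ) * (2 * Real.pi * Complex.I)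
      by push_cast; ring]
  rw [Complex.exp_add, Complex.exp_int_mul_two_pi_mul_I, mul_one]
  norm_num

lemma aux_coeff_bern (n : ℤ) :
    fourierCoeffOn (zero_lt_one' ℝ) (fun t : ℝ => ((t : ℂ) - 1 / 2)) n
      = -(1 / (2 * Real.pi * Complex.I * n)) := by
  have hb1 : (fun t : ℝ => ((t : ℂ) - 1 / 2)) = fun t : ℝ => ((bernoulliFun 1 t : ℝ) : ℂ) := by
    funext t
    rw [aux_bernoulliFun_one]
    push_cast
    ring
  have hb2 : fourierCoeffOn (zero_lt_one' ℝ) (fun t : ℝ => ((bernoulliFun 1 t : ℝ) : ℂ)) n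
      = bernoulliFourierCoeff 1 n := rfl
  rw [hb1, hb2]
  rcases eq_or_ne n 0 with rfl | hn
  · rw [bernoulliFourierCoeff_zero one_ne_zero]
    simp
  · rw [bernoulliFourierCoeff_eq one_ne_zero n]
    simp only [Nat.factorial_one, Nat.cast_one, pow_one, neg_div]

lemma aux_coeff (a : ℝ) (ha : 0 < a) (n : ℤ) :
    fourierCoeff (AddCircle.liftIco 1 0 (auxg a)) n
      = 1 / ((a : ℂ) - 2 * Real.pi * Complex.I * n) + 1 / (2 * Real.pi * Complex.I * n) := by
  haveI : Fact ((0 : ℝ) < 1) := ⟨zero_lt_one⟩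
  have h1 : fourierCoeff (AddCircle.liftIco 1 0 (auxg a)) n
      = fourierCoeffOn (zero_lt_one' ℝ) (auxg a) n := by
    rw [fourierCoeff_liftIco_eq]
    simp only [zero_add]
  rw [h1]
  have h2 : auxg a = fun t : ℝ =>
      (fun t : ℝ => (Complex.exp a - 1)⁻¹ * Complex.exp (a * t)) t
        - (fun t : ℝ => ((t : ℂ) - 1 / 2)) t := rfl
  rw [h2, aux_fourierCoeffOn_sub (by fun_prop) (by fun_prop)]
  have h3 : fourierCoeffOn (zero_lt_one' ℝ)
      (fun t : ℝ => (Complex.exp a - 1)⁻¹ * Complex.exp (a * t)) n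
      = (Complex.exp a - 1)⁻¹ * ((Complex.exp a - 1) / ((a : ℂ) - 2 * Real.pi * Complex.I * n)) := by
    rw [← aux_coeff_exp a ha n]
    exact fourierCoeffOn.const_mul _ _ _ _
  rw [h3, aux_coeff_bern]
  rw [inv_mul_eq_div, div_right_comm, div_self (auxE_ne a ha), sub_neg_eq_add]

lemma aux_summable (a : ℝ) (ha : 0 < a) :
    Summable (fun n : ℤ =>
      1 / ((a : ℂ) - 2 * Real.pi * Complex.I * n) + 1 / (2 * Real.pi * Complex.I * n)) := by
  have hπ := Real.pi_pos
  have hS : Summable (fun n : ℤ => a / (4 * Real.pi ^ 2) * (1 / (n : ℝ) ^ 2)) :=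
    (Real.summable_one_div_int_pow.mpr one_lt_two).mul_left _
  apply Summable.of_norm_bounded_eventually hS
  have hfin : ({0} : Set ℤ).Finite := Set.finite_singleton 0
  apply Filter.mem_of_superset hfin.compl_mem_cofinite
  intro n hn
  simp only [Set.mem_compl_iff, Set.mem_singleton_iff] at hn
  simp only [Set.mem_setOf_eq]
  have hn' : (n : ℂ) ≠ 0 := Int.cast_ne_zero.mpr hn
  have hA : ((a : ℂ) - 2 * Real.pi * Complex.I * n) ≠ 0 := by
    intro h
    have := congrArg Complex.re h
    simp [Complex.sub_re, Complex.mul_re, Complex.mul_im] at this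
    exact absurd this (ne_of_gt ha)
  have hB : (2 * (Real.pi : ℂ) * Complex.I * n) ≠ 0 := by
    simp [Real.pi_ne_zero, Complex.I_ne_zero, hn']
  have hcomb : 1 / ((a : ℂ) - 2 * Real.pi * Complex.I * n) + 1 / (2 * Real.pi * Complex.I * n)
      = (a : ℂ) / (((a : ℂ) - 2 * Real.pi * Complex.I * n) * (2 * Real.pi * Complex.I * n)) := by
    field_simp
    ring
  rw [hcomb, norm_div, norm_mul]
  have h1 : ‖((a : ℂ))‖ = a := by
    rw [Complex.norm_real, Real.norm_eq_abs, abs_of_pos ha]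
  have h2 : ‖(2 * (Real.pi : ℂ) * Complex.I * n)‖ = 2 * Real.pi * |(n : ℝ)| := by
    simp only [norm_mul, Complex.norm_I, Complex.norm_real, Real.norm_eq_abs, Complex.norm_two,
      Complex.norm_intCast]
    rw [abs_of_pos hπ]
    push_cast
    ring
  have hnabs : (1 : ℝ) ≤ |(n : ℝ)| := by
    rw [← Int.cast_abs]
    exact_mod_cast Int.one_le_abs hn
  have him : 2 * Real.pi * |(n : ℝ)| ≤ ‖((a : ℂ) - 2 * Real.pi * Complex.I * n)‖ := by
    have hle := Complex.abs_im_le_norm ((a : ℂ) - 2 * Real.pi * Complex.I * n)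
    have himval : ((a : ℂ) - 2 * Real.pi * Complex.I * n).im = -(2 * Real.pi * n) := by
      simp [Complex.sub_im, Complex.mul_im, Complex.mul_re]
    rw [himval, abs_neg] at hle
    calc 2 * Real.pi * |(n : ℝ)| = |2 * Real.pi * n| := by
          rw [abs_mul, abs_of_pos (by positivity : (0:ℝ) < 2 * Real.pi)]
    _ ≤ ‖((a : ℂ) - 2 * Real.pi * Complex.I * n)‖ := hle
  rw [h1, h2]
  have hpos : (0:ℝ) < 2 * Real.pi * |(n : ℝ)| := by positivity
  calc a / (‖((a : ℂ) - 2 * Real.pi * Complex.I * n)‖ * (2 * Real.pi * |(n : ℝ)|))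
      ≤ a / ((2 * Real.pi * |(n : ℝ)|) * (2 * Real.pi * |(n : ℝ)|)) := by
        apply div_le_div_of_nonneg_left ha.le (by positivity)
        exact mul_le_mul_of_nonneg_right him hpos.le
  _ = a / (4 * Real.pi ^ 2) * (1 / (n : ℝ) ^ 2) := by
        rw [div_mul_div_comm, mul_one]
        congr 1
        have : |(n:ℝ)| * |(n:ℝ)| = (n:ℝ) ^ 2 := by rw [abs_mul_abs_self]; ring
        nlinarith [this]

lemma aux_hasSum (a : ℝ) (ha : 0 < a) {u : ℝ} (hu : u ∈ Set.Ico (0 : ℝ) 1) :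
    HasSum (fun n : ℤ =>
      Complex.exp (2 * Real.pi * u * Complex.I) ^ n *
        (1 / ((a : ℂ) - 2 * Real.pi * Complex.I * n) + 1 / (2 * Real.pi * Complex.I * n)))
      ((Complex.exp a - 1)⁻¹ * Complex.exp (a * u) - ((u : ℂ) - 1 / 2)) := by
  haveI : Fact ((0 : ℝ) < 1) := ⟨zero_lt_one⟩
  have hend : auxg a 0 = auxg a 1 := by
    simp only [auxg]
    rw [Complex.ofReal_zero, Complex.ofReal_one, mul_zero, mul_one, Complex.exp_zero]
    have hE := auxE_ne a ha
    field_simp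
    ring
  have hcont : Continuous (AddCircle.liftIco 1 0 (auxg a)) := by
    apply AddCircle.liftIco_zero_continuous hend
    apply Continuous.continuousOn
    unfold auxg
    fun_prop
  set F : C(AddCircle (1 : ℝ), ℂ) := ⟨AddCircle.liftIco 1 0 (auxg a), hcont⟩ with hF
  have hcoeff : ∀ n : ℤ, fourierCoeff (⇑F) n
      = 1 / ((a : ℂ) - 2 * Real.pi * Complex.I * n) + 1 / (2 * Real.pi * Complex.I * n) :=
    fun n => aux_coeff a ha n
  have hsum : Summable (fourierCoeff (⇑F)) := by
    rw [show fourierCoeff (⇑F) = fun n : ℤ =>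
      1 / ((a : ℂ) - 2 * Real.pi * Complex.I * n) + 1 / (2 * Real.pi * Complex.I * n)
      from funext hcoeff]
    exact aux_summable a ha
  have hps := has_pointwise_sum_fourier_series_of_summable hsum ((u : ℝ) : AddCircle (1:ℝ))
  have hval : F ((u : ℝ) : AddCircle (1:ℝ)) = (Complex.exp a - 1)⁻¹ * Complex.exp (a * u)
      - ((u : ℂ) - 1 / 2) := by
    have : AddCircle.liftIco 1 0 (auxg a) ((u : ℝ) : AddCircle (1:ℝ)) = auxg a u :=
      AddCircle.liftIco_coe_apply (by rw [zero_add]; exact hu)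
    simpa [hF, auxg] using this
  rw [hval] at hps
  have heq : (fun n : ℤ => Complex.exp (2 * Real.pi * u * Complex.I) ^ n *
      (1 / ((a : ℂ) - 2 * Real.pi * Complex.I * n) + 1 / (2 * Real.pi * Complex.I * n)))
      = fun n : ℤ => fourierCoeff (⇑F) n • fourier n ((u : ℝ) : AddCircle (1:ℝ)) := by
    funext n
    rw [hcoeff n, smul_eq_mul, mul_comm]
    congr 1
    rw [fourier_coe_apply, ← Complex.exp_int_mul]
    congr 1
    push_cast
    ring
  rw [heq]
  exact hps

lemma aux_key (a : ℝ) (ha : 0 < a) (x : ℝ) (hfr : Int.fract x ≠ 0) :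
    Tendsto (fun N : ℕ => ∑ k ∈ Finset.Icc (-(N : ℤ)) (N : ℤ),
        Complex.exp (2 * Real.pi * x * Complex.I) ^ k
          / ((a : ℂ) - 2 * Real.pi * Complex.I * k)) atTop
      (𝓝 ((Complex.exp a - 1)⁻¹ * Complex.exp (a * Int.fract x))) := by
  have hπ := Real.pi_pos
  set u := Int.fract x with hudef
  have hu0 : 0 < u := lt_of_le_of_ne (Int.fract_nonneg x) (Ne.symm hfr)
  have hu1 : u < 1 := Int.fract_lt_one x
  have hw : Complex.exp (2 * Real.pi * x * Complex.I)
      = Complex.exp (2 * Real.pi * u * Complex.I) := by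
    have hxu : (x : ℂ) = (u : ℂ) + ((⌊x⌋ : ℤ) : ℂ) := by
      rw [hudef, Int.fract]
      push_cast
      ring
    rw [show (2 * (Real.pi : ℂ) * (x : ℂ) * Complex.I)
        = 2 * (Real.pi : ℂ) * (u : ℂ) * Complex.I + ((⌊x⌋ : ℤ) : ℂ) * (2 * Real.pi * Complex.I)
        from by rw [hxu]; ring]
    rw [Complex.exp_add, Complex.exp_int_mul_two_pi_mul_I, mul_one]
  rw [funext fun N => Finset.sum_congr rfl fun k _ => by rw [hw]]
  set ω := Complex.exp (2 * Real.pi * u * Complex.I) with hωdef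
  have hωnorm : ‖ω‖ = 1 := by
    rw [hωdef, Complex.norm_exp]
    norm_num
  have hωne : ω ≠ 1 := by
    rw [hωdef, Ne, Complex.exp_eq_one_iff]
    rintro ⟨n, hn⟩
    have him := congrArg Complex.im hn
    simp only [Complex.mul_im, Complex.I_im, Complex.I_re, Complex.mul_re] at him
    have : 2 * Real.pi * u = n * (2 * Real.pi) := by
      simpa using him
    have hun : u = n := by
      have h2 : 2 * Real.pi * u = 2 * Real.pi * n := by linarith
      have := mul_left_cancel₀ (by positivity : (2 * Real.pi : ℝ) ≠ 0) h2
      exact this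
    have hn0 : (0:ℝ) < n := hun ▸ hu0
    have hn1 : (n:ℝ) < 1 := hun ▸ hu1
    have h0 : 0 < n := by exact_mod_cast hn0
    have h1' : n < 1 := by exact_mod_cast hn1
    omega
  set v := ω⁻¹ with hvdef
  have hvnorm : ‖v‖ = 1 := by rw [hvdef, norm_inv, hωnorm]; norm_num
  have hvne : v ≠ 1 := by
    rw [hvdef]
    intro h
    exact hωne (by rw [← inv_inv ω, h, inv_one])
  -- Part 1 : absolutely convergent Fourier part
  have h1 := aux_hasSum a ha ⟨hu0.le, hu1⟩
  have t1 := aux_tendsto_sum_Icc h1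
  -- Part 2 : conditionally convergent part
  have hlog1 := aux_boundary_log hωnorm hωne
  have hlog2 := aux_boundary_log hvnorm hvne
  set f₂ : ℤ → ℂ := fun k => -(ω ^ k * (1 / (2 * Real.pi * Complex.I * k))) with hf₂
  have hA : Tendsto (fun N : ℕ => ∑ j ∈ Finset.range (N + 1), f₂ j) atTop
      (𝓝 (-(1 / (2 * Real.pi * Complex.I)) * -Complex.log (1 - ω))) := by
    have heq : ∀ N : ℕ, ∑ j ∈ Finset.range (N + 1), f₂ j
        = -(1 / (2 * Real.pi * Complex.I)) * ∑ j ∈ Finset.range (N + 1), ω ^ j / j := by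
      intro N
      rw [Finset.mul_sum]
      apply Finset.sum_congr rfl
      intro j _
      rw [hf₂]
      push_cast
      rw [zpow_natCast]
      rw [one_div, mul_inv, mul_inv, one_div]
      ring
    rw [funext heq]
    exact (Tendsto.const_mul _ (hlog1.comp (tendsto_add_atTop_nat 1)))
  have hB : Tendsto (fun N : ℕ => ∑ j ∈ Finset.range N, f₂ (-(j + 1))) atTop
      (𝓝 ((1 / (2 * Real.pi * Complex.I)) * -Complex.log (1 - v))) := by
    have heq : ∀ N : ℕ, ∑ j ∈ Finset.range N, f₂ (-(j + 1))
        = (1 / (2 * Real.pi * Complex.I)) * ∑ k ∈ Finset.range (N + 1), v ^ k / k := by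
      intro N
      have step1 : ∑ j ∈ Finset.range N, f₂ (-(j + 1))
          = ∑ j ∈ Finset.range N, (1 / (2 * Real.pi * Complex.I)) * (v ^ (j + 1) / ((j : ℂ) + 1)) := by
        apply Finset.sum_congr rfl
        intro j _
        rw [hf₂]
        have hz : ω ^ (-((j : ℤ) + 1)) = v ^ (j + 1) := by
          rw [zpow_neg, show ((j : ℤ) + 1) = ((j + 1 : ℕ) : ℤ) by push_cast; ring,
            zpow_natCast, hvdef]
          exact (inv_pow ω (j + 1)).symm
        simp only
        rw [hz]
        have hj : ((j : ℂ) + 1) ≠ 0 := by exact_mod_cast Nat.cast_add_one_ne_zero (R := ℂ) j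
        have hc : ((-((j : ℤ) + 1) : ℤ) : ℂ) = -((j : ℂ) + 1) := by push_cast; ring
        rw [hc, mul_neg, one_div, one_div, inv_neg, mul_inv, div_eq_mul_inv]
        ring
      rw [step1, ← Finset.mul_sum]
      congr 1
      rw [Finset.sum_range_succ' (fun k => v ^ k / (k : ℂ)) N]
      simp
    rw [funext heq]
    exact Tendsto.const_mul _ (hlog2.comp (tendsto_add_atTop_nat 1))
  have t2 : Tendsto (fun N : ℕ => ∑ k ∈ Finset.Icc (-(N : ℤ)) (N : ℤ), f₂ k) atTop
      (𝓝 ((u : ℂ) - 1 / 2)) := by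
    rw [funext fun N => aux_sum_Icc_split f₂ N]
    have hcomb := hA.add hB
    have hval : -(1 / (2 * (Real.pi:ℂ) * Complex.I)) * -Complex.log (1 - ω)
        + (1 / (2 * (Real.pi:ℂ) * Complex.I)) * -Complex.log (1 - v) = ((u : ℂ) - 1 / 2) := by
      have hd := aux_log_diff hu0 hu1
      rw [← hωdef] at hd
      rw [hvdef]
      have hstep : -(1 / (2 * (Real.pi:ℂ) * Complex.I)) * -Complex.log (1 - ω)
          + (1 / (2 * (Real.pi:ℂ) * Complex.I)) * -Complex.log (1 - ω⁻¹)
          = (1 / (2 * (Real.pi:ℂ) * Complex.I))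
            * (Complex.log (1 - ω) - Complex.log (1 - ω⁻¹)) := by ring
      rw [hstep, hd]
      have hπ' : (Real.pi : ℂ) ≠ 0 := Complex.ofReal_ne_zero.mpr Real.pi_ne_zero
      field_simp
    rw [← hval]
    exact hcomb
  rw [← hωdef] at t1
  have hfeq : (fun N : ℕ => ∑ k ∈ Finset.Icc (-(N : ℤ)) (N : ℤ),
      ω ^ k / ((a : ℂ) - 2 * Real.pi * Complex.I * k))
      = fun N : ℕ => (∑ k ∈ Finset.Icc (-(N : ℤ)) (N : ℤ),
          ω ^ k * (1 / ((a : ℂ) - 2 * Real.pi * Complex.I * k)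
            + 1 / (2 * Real.pi * Complex.I * k)))
        + ∑ k ∈ Finset.Icc (-(N : ℤ)) (N : ℤ), f₂ k := by
    funext N
    rw [← Finset.sum_add_distrib]
    apply Finset.sum_congr rfl
    intro k _
    simp only [hf₂]
    ring
  rw [hfeq]
  have htot := t1.add t2
  have hfin : ((Complex.exp a - 1)⁻¹ * Complex.exp (a * u) - ((u : ℂ) - 1 / 2))
      + ((u : ℂ) - 1 / 2) = (Complex.exp a - 1)⁻¹ * Complex.exp (a * u) := by ring
  rw [hfin] at htot
  exact htot

open Filter in
/-- Let `D = log 2 / log 3` and `𝐩 = 2π / log 3`. For every real `ε` with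
`0 < ε ≤ 1/3` such that `log_3(1/ε)` is not an integer, the symmetric partial sums converge
and `(1/3)·(2/3)^{⌊log_3(1/ε)⌋} = (1/(6 log 3)) · lim_{N→∞} ∑_{n=-N}^{N}
ε^{1-D-in𝐩}/(1-D-in𝐩)` (the exact fractal tube formula for the 3-adic Cantor string). -/
theorem nonarchimedean_cantor_string_tube_formula (ε : ℝ) (hε : 0 < ε) (hε3 : ε ≤ 1 / 3)
    (hirr : ¬∃ k : ℤ, Real.logb 3 (1 / ε) = k) :
    Tendsto (fun N : ℕ => (1 / (6 * (Real.log 3 : ℂ))) *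
        ∑ k ∈ Finset.Icc (-(N : ℤ)) (N : ℤ),
          (ε : ℂ) ^ ((1 : ℂ) - ((Real.log 2 / Real.log 3 : ℝ) : ℂ)
              - (k : ℂ) * ((2 * Real.pi / Real.log 3 : ℝ) : ℂ) * Complex.I)
            / ((1 : ℂ) - ((Real.log 2 / Real.log 3 : ℝ) : ℂ)
              - (k : ℂ) * ((2 * Real.pi / Real.log 3 : ℝ) : ℂ) * Complex.I))
      atTop
      (nhds (((1 / 3 : ℝ) * (2 / 3 : ℝ) ^ ⌊Real.logb 3 (1 / ε)⌋ : ℝ) : ℂ)) := by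
  have hπ := Real.pi_pos
  set x := Real.logb 3 (1 / ε) with hx
  set L := Real.log 3 with hL
  have hLpos : 0 < L := Real.log_pos (by norm_num)
  have hLne : (L : ℂ) ≠ 0 := Complex.ofReal_ne_zero.mpr hLpos.ne'
  set a := Real.log 3 - Real.log 2 with ha
  have hapos : 0 < a := sub_pos.mpr (Real.log_lt_log (by norm_num) (by norm_num))
  have hfr : Int.fract x ≠ 0 := by
    intro h
    apply hirr
    refine ⟨⌊x⌋, ?_⟩
    rw [Int.fract] at h
    linarith [h]
  have hlogε : Real.log ε = -(x * L) := by
    rw [hx, hL, Real.logb, one_div, Real.log_inv]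
    field_simp
  have hεC : (ε : ℂ) ≠ 0 := Complex.ofReal_ne_zero.mpr hε.ne'
  have hAne : ∀ k : ℤ, ((a : ℂ) - 2 * Real.pi * Complex.I * k) ≠ 0 := by
    intro k h
    have := congrArg Complex.re h
    simp [Complex.sub_re, Complex.mul_re, Complex.mul_im] at this
    exact absurd this (ne_of_gt hapos)
  have hck : ∀ k : ℤ, ((1 : ℂ) - ((Real.log 2 / Real.log 3 : ℝ) : ℂ)
      - (k : ℂ) * ((2 * Real.pi / Real.log 3 : ℝ) : ℂ) * Complex.I)
      = ((a : ℂ) - 2 * Real.pi * Complex.I * k) / (L : ℂ) := by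
    intro k
    rw [ha, hL]
    push_cast
    rw [← hL]
    field_simp
  have hsummand : ∀ k : ℤ, (ε : ℂ) ^ ((1 : ℂ) - ((Real.log 2 / Real.log 3 : ℝ) : ℂ)
      - (k : ℂ) * ((2 * Real.pi / Real.log 3 : ℝ) : ℂ) * Complex.I)
      / ((1 : ℂ) - ((Real.log 2 / Real.log 3 : ℝ) : ℂ)
      - (k : ℂ) * ((2 * Real.pi / Real.log 3 : ℝ) : ℂ) * Complex.I)
      = ((L : ℂ) * Complex.exp (-((a : ℂ) * (x : ℂ))))
        * (Complex.exp (2 * Real.pi * x * Complex.I) ^ k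
          / ((a : ℂ) - 2 * Real.pi * Complex.I * k)) := by
    intro k
    rw [hck k]
    have hcpow : (ε : ℂ) ^ (((a : ℂ) - 2 * Real.pi * Complex.I * k) / (L : ℂ))
        = Complex.exp (-((a : ℂ) * (x : ℂ)))
          * Complex.exp (2 * Real.pi * x * Complex.I) ^ k := by
      rw [Complex.cpow_def_of_ne_zero hεC]
      rw [← Complex.ofReal_log hε.le, hlogε]
      have harg : ((-(x * L) : ℝ) : ℂ) * (((a : ℂ) - 2 * Real.pi * Complex.I * k) / (L : ℂ))
          = -((a : ℂ) * (x : ℂ)) + (k : ℂ) * (2 * Real.pi * x * Complex.I) := by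
        push_cast
        field_simp
        ring
      rw [harg, Complex.exp_add, Complex.exp_int_mul]
    rw [hcpow, div_div_eq_mul_div]
    ring
  have hgoalfun : (fun N : ℕ => (1 / (6 * (L : ℂ))) *
      ∑ k ∈ Finset.Icc (-(N : ℤ)) (N : ℤ),
        (ε : ℂ) ^ ((1 : ℂ) - ((Real.log 2 / Real.log 3 : ℝ) : ℂ)
            - (k : ℂ) * ((2 * Real.pi / Real.log 3 : ℝ) : ℂ) * Complex.I)
          / ((1 : ℂ) - ((Real.log 2 / Real.log 3 : ℝ) : ℂ)
            - (k : ℂ) * ((2 * Real.pi / Real.log 3 : ℝ) : ℂ) * Complex.I))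
      = fun N : ℕ => ((1 / (6 * (L : ℂ))) * ((L : ℂ) * Complex.exp (-((a : ℂ) * (x : ℂ)))))
          * ∑ k ∈ Finset.Icc (-(N : ℤ)) (N : ℤ),
            Complex.exp (2 * Real.pi * x * Complex.I) ^ k
              / ((a : ℂ) - 2 * Real.pi * Complex.I * k) := by
    funext N
    rw [Finset.sum_congr rfl fun k _ => hsummand k, ← Finset.mul_sum, ← mul_assoc]
  rw [hgoalfun]
  have hkey := aux_key a hapos x hfr
  have htend := hkey.const_mul ((1 / (6 * (L : ℂ))) * ((L : ℂ) * Complex.exp (-((a : ℂ) * (x : ℂ)))))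
  convert htend using 2
  have hEa : Complex.exp ((a : ℝ) : ℂ) = (3 / 2 : ℂ) := by
    rw [← Complex.ofReal_exp]
    have : Real.exp a = 3 / 2 := by
      rw [ha, Real.exp_sub, Real.exp_log (by norm_num : (0:ℝ) < 3),
        Real.exp_log (by norm_num : (0:ℝ) < 2)]
    rw [this]
    norm_num
  have hEinv : (Complex.exp ((a : ℝ) : ℂ) - 1)⁻¹ = 2 := by
    rw [hEa]
    norm_num
  have hprod : Complex.exp (-((a : ℂ) * (x : ℂ))) * Complex.exp ((a : ℂ) * ((Int.fract x : ℝ) : ℂ))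
      = ((2 / 3 : ℂ)) ^ (⌊x⌋ : ℤ) := by
    rw [← Complex.exp_add]
    have harg : -((a : ℂ) * (x : ℂ)) + (a : ℂ) * ((Int.fract x : ℝ) : ℂ)
        = ((⌊x⌋ : ℤ) : ℂ) * (-((a : ℝ) : ℂ)) := by
      rw [Int.fract]
      push_cast
      ring
    rw [harg, Complex.exp_int_mul]
    congr 1
    rw [Complex.exp_neg, hEa]
    norm_num
  symm
  rw [mul_comm ((Complex.exp ((a : ℝ) : ℂ) - 1)⁻¹), hEinv]
  calc (1 / (6 * (L : ℂ))) * ((L : ℂ) * Complex.exp (-((a : ℂ) * (x : ℂ))))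
      * (Complex.exp ((a : ℂ) * ((Int.fract x : ℝ) : ℂ)) * 2)
      = (1 / 3 : ℂ) * (Complex.exp (-((a : ℂ) * (x : ℂ)))
          * Complex.exp ((a : ℂ) * ((Int.fract x : ℝ) : ℂ))) := by
        field_simp
        ring
  _ = (1 / 3 : ℂ) * ((2 / 3 : ℂ)) ^ (⌊x⌋ : ℤ) := by rw [hprod]
  _ = (((1 / 3 : ℝ) * (2 / 3 : ℝ) ^ ⌊x⌋ : ℝ) : ℂ) := by
        push_cast
        ring
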